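/- arXiv:2111.05104 — 2 statements merged into one kernel-verified Lean document; each statement's English description precedes it below -/
import Mathlib

section
/- The recurrence coefficient β_n(t) for the weight w(x,t) = (1-x^2)^α e^{-t x^2} on [-1,1] satisfies the second-order nonlinear difference equation (n - 2tβ_n)^2 + 2α(n - 2tβ_n) - β_n (2n - 1 + 2α - 2tβ_{n-1} - 2tβ_n)(2n + 1 + 2α - 2tβ_n - 2tβ_{n+1}) = 0 for all n ≥ 1. -/
open MeasureTheory Polynomial intervalIntegral


lemma bde_meas (α : ℝ) : Measurable (fun x : ℝ => (1 - x ^ 2) ^ α) := by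
  have h1 : Measurable (fun y : ℝ => y ^ α) := by
    apply measurable_of_continuousOn_compl_singleton (0:ℝ)
    intro y hy
    exact (Real.continuousAt_rpow_const y α (Or.inl hy)).continuousWithinAt
  exact h1.comp (measurable_const.sub (measurable_id.pow_const 2))

lemma bde_int (α t : ℝ) (hα : α > -1) (q : Polynomial ℝ) :
    IntervalIntegrable (fun x => q.eval x * ((1 - x ^ 2) ^ α * Real.exp (-t * x ^ 2)))
      volume (-1) 1 := by
  have hbase : IntervalIntegrable (fun x : ℝ => (1 - x ^ 2) ^ α) volume (-1) 1 := by
    have h01 : IntervalIntegrable (fun x : ℝ => (1 - x ^ 2) ^ α) volume 0 1 := by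
      have h1 : IntervalIntegrable (fun x : ℝ => (1 - x) ^ α) volume 0 1 := by
        have := (intervalIntegrable_rpow' (a := 0) (b := 1) hα).comp_sub_left 1
        simpa using this.symm
      have h2 : IntervalIntegrable (fun x : ℝ => max 1 (2 ^ α) * (1 - x) ^ α) volume 0 1 :=
        h1.const_mul _
      refine h2.mono_fun (bde_meas α).aestronglyMeasurable ?_
      rw [Filter.EventuallyLE, ae_restrict_iff' measurableSet_uIoc]
      refine Filter.Eventually.of_forall fun x hx => ?_
      rw [Set.uIoc_of_le (by norm_num : (0:ℝ) ≤ 1)] at hx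
      have hx0 : 0 < x := hx.1
      have hx1 : x ≤ 1 := hx.2
      have h1x : (0:ℝ) ≤ 1 - x := by linarith
      have h1px : (0:ℝ) ≤ 1 + x := by linarith
      rw [show (1 - x ^ 2 : ℝ) = (1 - x) * (1 + x) by ring, Real.mul_rpow h1x h1px,
        Real.norm_eq_abs, Real.norm_eq_abs, abs_of_nonneg (by positivity),
        abs_of_nonneg (by positivity)]
      have hb : (1 + x) ^ α ≤ max 1 (2 ^ α) := by
        rcases le_or_gt 0 α with hα0 | hα0
        · exact le_max_of_le_right (Real.rpow_le_rpow h1px (by linarith) hα0)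
        · exact le_max_of_le_left (Real.rpow_le_one_of_one_le_of_nonpos (by linarith) hα0.le)
      calc (1 - x) ^ α * (1 + x) ^ α ≤ (1 - x) ^ α * max 1 (2 ^ α) :=
            mul_le_mul_of_nonneg_left hb (by positivity)
        _ = max 1 (2 ^ α) * (1 - x) ^ α := by ring
    have hm0 : IntervalIntegrable (fun x : ℝ => (1 - x ^ 2) ^ α) volume (-1) 0 := by
      have h1 : IntervalIntegrable (fun x : ℝ => (1 + x) ^ α) volume (-1) 0 := by
        have := (intervalIntegrable_rpow' (a := 0) (b := 1) hα).comp_add_right 1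
        simpa [add_comm] using this
      have h2 : IntervalIntegrable (fun x : ℝ => max 1 (2 ^ α) * (1 + x) ^ α) volume (-1) 0 :=
        h1.const_mul _
      refine h2.mono_fun (bde_meas α).aestronglyMeasurable ?_
      rw [Filter.EventuallyLE, ae_restrict_iff' measurableSet_uIoc]
      refine Filter.Eventually.of_forall fun x hx => ?_
      rw [Set.uIoc_of_le (by norm_num : (-1:ℝ) ≤ 0)] at hx
      have hx0 : -1 < x := hx.1
      have hx1 : x ≤ 0 := hx.2
      have h1x : (0:ℝ) ≤ 1 - x := by linarith
      have h1px : (0:ℝ) ≤ 1 + x := by linarith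
      rw [show (1 - x ^ 2 : ℝ) = (1 - x) * (1 + x) by ring, Real.mul_rpow h1x h1px,
        Real.norm_eq_abs, Real.norm_eq_abs, abs_of_nonneg (by positivity),
        abs_of_nonneg (by positivity)]
      have hb : (1 - x) ^ α ≤ max 1 (2 ^ α) := by
        rcases le_or_gt 0 α with hα0 | hα0
        · exact le_max_of_le_right (Real.rpow_le_rpow h1x (by linarith) hα0)
        · exact le_max_of_le_left (Real.rpow_le_one_of_one_le_of_nonpos (by linarith) hα0.le)
      calc (1 - x) ^ α * (1 + x) ^ α ≤ max 1 (2 ^ α) * (1 + x) ^ α :=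
            mul_le_mul_of_nonneg_right hb (by positivity)
        _ = max 1 (2 ^ α) * (1 + x) ^ α := by rfl
    exact hm0.trans h01
  obtain ⟨C, hC⟩ : ∃ C, ∀ x ∈ Set.Icc (-1:ℝ) 1, ‖q.eval x * Real.exp (-t * x ^ 2)‖ ≤ C := by
    have hcont : ContinuousOn (fun x : ℝ => q.eval x * Real.exp (-t * x ^ 2)) (Set.Icc (-1) 1) :=
      (q.continuous.mul (Real.continuous_exp.comp (by continuity))).continuousOn
    exact isCompact_Icc.exists_bound_of_continuousOn hcont
  have h2 : IntervalIntegrable (fun x : ℝ => C * ‖(1 - x ^ 2) ^ α‖) volume (-1) 1 :=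
    hbase.norm.const_mul _
  refine h2.mono_fun' ?_ ?_
  · apply Measurable.aestronglyMeasurable
    exact (q.continuous.measurable).mul
      ((bde_meas α).mul (Real.measurable_exp.comp (by measurability)))
  · rw [Filter.EventuallyLE, ae_restrict_iff' measurableSet_uIoc]
    refine Filter.Eventually.of_forall fun x hx => ?_
    rw [Set.uIoc_of_le (by norm_num : (-1:ℝ) ≤ 1)] at hx
    have hxI : x ∈ Set.Icc (-1:ℝ) 1 := ⟨hx.1.le, hx.2⟩
    have := hC x hxI
    calc ‖q.eval x * ((1 - x ^ 2) ^ α * Real.exp (-t * x ^ 2))‖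
        = ‖q.eval x * Real.exp (-t * x ^ 2)‖ * ‖(1 - x ^ 2) ^ α‖ := by
          rw [← norm_mul]; ring_nf
      _ ≤ C * ‖(1 - x ^ 2) ^ α‖ := mul_le_mul_of_nonneg_right this (norm_nonneg _)

lemma bde_odd (α t : ℝ) :
    ∫ x in (-1:ℝ)..1, x * ((1 - x ^ 2) ^ α * Real.exp (-t * x ^ 2)) = 0 := by
  have h := integral_comp_neg (a := (-1:ℝ)) (b := 1)
    (f := fun x => x * ((1 - x ^ 2) ^ α * Real.exp (-t * x ^ 2)))
  simp only [neg_neg, neg_sq, neg_mul] at h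
  rw [intervalIntegral.integral_neg] at h
  simp only [neg_mul] at h ⊢
  linarith

lemma bde_ibp (α t : ℝ) (hα : α > -1) (Q : Polynomial ℝ) :
    ∫ x in (-1:ℝ)..1,
      ((1 - X ^ 2) * derivative Q - C (2 * (1 + α)) * (X * Q)
        - C (2 * t) * (X * ((1 - X ^ 2) * Q))).eval x
        * ((1 - x ^ 2) ^ α * Real.exp (-t * x ^ 2)) = 0 := by
  set F' : ℝ → ℝ := fun x =>
    ((1 - X ^ 2) * derivative Q - C (2 * (1 + α)) * (X * Q)
        - C (2 * t) * (X * ((1 - X ^ 2) * Q))).eval x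
      * ((1 - x ^ 2) ^ α * Real.exp (-t * x ^ 2)) with hF'
  set g : ℝ → ℝ := fun x => (1 - x ^ 2) ^ (α + 1) * (Real.exp (-t * x ^ 2) * Q.eval x) with hg
  have hcont : ContinuousOn g (Set.Icc (-1) 1) := by
    apply Continuous.continuousOn
    exact ((Real.continuous_rpow_const (by linarith)).comp (by continuity)).mul
      ((Real.continuous_exp.comp (by continuity)).mul Q.continuous)
  have hderiv : ∀ x ∈ Set.Ioo (-1:ℝ) 1, HasDerivWithinAt g (F' x) (Set.Ioi x) x := by
    intro x hx
    have h1x : (0:ℝ) < 1 - x ^ 2 := by nlinarith [hx.1, hx.2]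
    have hin : HasDerivAt (fun x : ℝ => 1 - x ^ 2) (-(2 * x)) x := by
      simpa using (hasDerivAt_pow 2 x).const_sub 1
    have hd1 := hin.rpow_const (p := α + 1) (Or.inl h1x.ne')
    have hin2 : HasDerivAt (fun x : ℝ => -t * x ^ 2) (-t * (2 * x)) x := by
      simpa using (hasDerivAt_pow 2 x).const_mul (-t)
    have hd2 := hin2.exp
    have hd3 := Q.hasDerivAt x
    have htot := hd1.mul (hd2.mul hd3)
    refine HasDerivAt.hasDerivWithinAt (x := x) ?_
    refine (show HasDerivAt g _ x from htot).congr_deriv ?_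
    symm
    simp only [hF', eval_sub, eval_mul, eval_add, eval_one, eval_pow, eval_X, eval_C, Pi.mul_apply]
    rw [show α + 1 - 1 = α by ring, show (1 - x ^ 2) ^ (α + 1)
      = (1 - x ^ 2) ^ α * (1 - x ^ 2) by rw [Real.rpow_add h1x, Real.rpow_one]]
    ring
  have hb1 : g 1 = 0 := by
    norm_num [hg, Real.zero_rpow (show α + 1 ≠ 0 by linarith)]
  have hb2 : g (-1) = 0 := by
    norm_num [hg, Real.zero_rpow (show α + 1 ≠ 0 by linarith)]
  have key := integral_eq_sub_of_hasDeriv_right_of_le (by norm_num : (-1:ℝ) ≤ 1)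
    hcont hderiv (bde_int α t hα _)
  rw [hb1, hb2] at key
  simpa using key

theorem beta_difference_eq (α t : ℝ) (hα : α > -1)
    (w : ℝ → ℝ) (hw : ∀ x, w x = (1 - x ^ 2) ^ α * Real.exp (-t * x ^ 2))
    (P : ℕ → Polynomial ℝ)
    (hmonic : ∀ n, (P n).Monic)
    (hdeg : ∀ n, (P n).natDegree = n)
    (horth : ∀ m n, m ≠ n → (∫ x in (-1:ℝ)..1, (P m).eval x * (P n).eval x * w x) = 0)
    (h : ℕ → ℝ)
    (hh : ∀ n, h n = ∫ x in (-1:ℝ)..1, ((P n).eval x) ^ 2 * w x)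
    (hpos : ∀ n, 0 < h n)
    (β : ℕ → ℝ) (hβ0 : β 0 = 0)
    (hrec : ∀ n, 1 ≤ n → ∀ x : ℝ, x * (P n).eval x = (P (n+1)).eval x + β n * (P (n-1)).eval x)
    :
    ∀ n : ℕ, 1 ≤ n →
      ((n : ℝ) - 2 * t * β n) ^ 2 + 2 * α * ((n : ℝ) - 2 * t * β n) -
        β n * (2 * n - 1 + 2 * α - 2 * t * β (n-1) - 2 * t * β n) *
          (2 * n + 1 + 2 * α - 2 * t * β n - 2 * t * β (n+1)) = 0 := by
  classical
  have hwint : ∀ q : Polynomial ℝ,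
      IntervalIntegrable (fun x => q.eval x * w x) volume (-1) 1 := by
    intro q; simp only [hw]; exact bde_int α t hα q
  set L : Polynomial ℝ → ℝ := fun q => ∫ x in (-1:ℝ)..1, q.eval x * w x with hL
  have Lad : ∀ p q, L (p + q) = L p + L q := by
    intro p q
    have := intervalIntegral.integral_add (hwint p) (hwint q)
    simpa [hL, eval_add, add_mul] using this
  have Lsub : ∀ p q, L (p - q) = L p - L q := by
    intro p q
    have := intervalIntegral.integral_sub (hwint p) (hwint q)
    simpa [hL, eval_sub, sub_mul] using this
  have Lsm : ∀ (c : ℝ) q, L (C c * q) = c * L q := by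
    intro c q
    simp only [hL, eval_mul, eval_C, mul_assoc]
    exact intervalIntegral.integral_const_mul c _
  have Lzero0 : L 0 = 0 := by simp [hL]
  have horthL : ∀ m n, m ≠ n → L (P m * P n) = 0 := by
    intro m n hmn
    rw [← horth m n hmn]
    exact intervalIntegral.integral_congr fun x _ => by simp [eval_mul, mul_assoc]
  have hhL : ∀ n, L (P n * P n) = h n := by
    intro n
    rw [hh n]
    exact intervalIntegral.integral_congr fun x _ => by simp [eval_mul, sq]
  have LX : L X = 0 := by
    simp only [hL, eval_X, hw]; exact bde_odd α t
  have hP0 : P 0 = 1 := (hmonic 0).natDegree_eq_zero.mp (hdeg 0)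
  have coefP : ∀ n k, n < k → (P n).coeff k = 0 := fun n k hk =>
    coeff_eq_zero_of_natDegree_lt (by rw [hdeg]; exact hk)
  have coefPs : ∀ n, (P n).coeff n = 1 := fun n => by
    have := (hmonic n).coeff_natDegree; rwa [hdeg] at this
  have Pne : ∀ n, P n ≠ 0 := fun n => (hmonic n).ne_zero
  have hP1 : P 1 = X := by
    have h1 : P 1 = X + C ((P 1).coeff 0) := (hmonic 1).eq_X_add_C (hdeg 1)
    have h2 := horthL 0 1 (by norm_num)
    rw [hP0, one_mul, h1, Lad] at h2
    have h3 : L (C ((P 1).coeff 0)) = (P 1).coeff 0 * h 0 := by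
      rw [show (C ((P 1).coeff 0) : Polynomial ℝ) = C ((P 1).coeff 0) * (P 0 * P 0) from by
        rw [hP0]; ring, Lsm, hhL]
    rw [LX, h3, zero_add] at h2
    have hc : (P 1).coeff 0 = 0 := by
      rcases mul_eq_zero.mp h2 with hc | hc
      · exact hc
      · exact absurd hc (hpos 0).ne'
    rw [h1, hc, map_zero, add_zero]
  have Prec : ∀ m : ℕ, X * P (m+1) = P (m+2) + C (β (m+1)) * P m := by
    intro m
    apply Polynomial.funext
    intro x
    have := hrec (m+1) (Nat.le_add_left 1 m) x
    simpa [eval_add, eval_mul, eval_C, eval_X, Nat.add_sub_cancel] using this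
  have Precu : ∀ m : ℕ, X * P m = P (m+1) + C (β m) * P (m-1) := by
    intro m
    match m with
    | 0 => rw [hP0, hβ0, mul_one, map_zero, zero_mul, add_zero, hP1]
    | (k+1) => simpa [Nat.add_sub_cancel] using Prec k
  have LZ : ∀ q n, q.natDegree < n → L (q * P n) = 0 := by
    suffices key : ∀ d, ∀ q : Polynomial ℝ, q.natDegree ≤ d → ∀ n, q.natDegree < n →
        L (q * P n) = 0 from fun q n hn => key q.natDegree q le_rfl n hn
    intro d
    induction d with
    | zero =>
      intro q hq n hn
      have hq0 : q = C (q.coeff 0) := Polynomial.eq_C_of_natDegree_le_zero hq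
      rw [hq0, show (C (q.coeff 0) : Polynomial ℝ) * P n = C (q.coeff 0) * (P 0 * P n) from by
        rw [hP0]; ring, Lsm, horthL 0 n (by omega), mul_zero]
    | succ d ih =>
      intro q hq n hn
      by_cases hds : q.natDegree ≤ d
      · exact ih q hds n hn
      have hqd : q.natDegree = d + 1 := le_antisymm hq (not_le.mp hds)
      have hdeg' : (q - C (q.coeff (d+1)) * P (d+1)).natDegree ≤ d := by
        apply Polynomial.natDegree_le_iff_coeff_eq_zero.mpr
        intro N hN
        rw [coeff_sub, coeff_C_mul]
        rcases eq_or_lt_of_le (Nat.succ_le_of_lt hN) with hNe | hNl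
        · rw [← hNe, coefPs (d+1), mul_one, sub_self]
        · rw [coeff_eq_zero_of_natDegree_lt (by omega), coefP (d+1) N (by omega),
            mul_zero, sub_zero]
      rw [show q * P n = (q - C (q.coeff (d+1)) * P (d+1)) * P n
            + C (q.coeff (d+1)) * (P (d+1) * P n) from by ring,
        Lad, Lsm, ih _ hdeg' n (by omega), horthL (d+1) n (by omega), mul_zero, add_zero]
  have T1 : ∀ m, L (X * P m * P (m+1)) = h (m+1) := by
    intro m
    have hD : (X * P m - P (m+1)).natDegree ≤ m := by
      apply Polynomial.natDegree_le_iff_coeff_eq_zero.mpr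
      intro N hN
      obtain ⟨j, rfl⟩ : ∃ j, N = (m + j) + 1 := ⟨N - (m+1), by omega⟩
      rw [coeff_sub, coeff_X_mul]
      cases j with
      | zero => simp only [Nat.add_zero, coefPs m, coefPs (m+1), sub_self]
      | succ k => rw [coefP m _ (by omega), coefP (m+1) _ (by omega), sub_self]
    rw [show X * P m * P (m+1) = (X * P m - P (m+1)) * P (m+1) + P (m+1) * P (m+1) from by
      ring, Lad, LZ _ _ (by omega), hhL, zero_add]
  have H : ∀ m, h (m+1) = β (m+1) * h m := by
    intro m
    have e1 : L (X * P (m+1) * P m) = β (m+1) * h m := by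
      rw [show X * P (m+1) * P m = P (m+2) * P m + C (β (m+1)) * (P m * P m) from by
        rw [Prec m]; ring, Lad, Lsm, horthL (m+2) m (by omega), hhL, zero_add]
    have e2 : L (X * P (m+1) * P m) = h (m+1) := by
      rw [show X * P (m+1) * P m = X * P m * P (m+1) from by ring, T1 m]
    rw [← e2, e1]
  have M2b : ∀ m, L (X^2 * P (m+1) * P (m+1)) = (β (m+2) + β (m+1)) * h (m+1) := by
    intro m
    have e : X^2 * P (m+1) * P (m+1)
        = P (m+2) * P (m+2) + (C (β (m+1)) * (P (m+2) * P m)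
          + (C (β (m+1)) * (P m * P (m+2)) + C (β (m+1)) * (C (β (m+1)) * (P m * P m)))) := by
      calc X^2 * P (m+1) * P (m+1) = (X * P (m+1)) * (X * P (m+1)) := by ring
      _ = (P (m+2) + C (β (m+1)) * P m) * (P (m+2) + C (β (m+1)) * P m) := by rw [Prec m]
      _ = _ := by ring
    rw [e, Lad, Lad, Lad, Lsm, Lsm, Lsm, Lsm, hhL, hhL, horthL (m+2) m (by omega),
      horthL m (m+2) (by omega)]
    linear_combination H (m+1) - β (m+1) * H m
  have TX : ∀ m, β m * L (X * P m * P (m-1)) = β m * h m := by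
    intro m
    match m with
    | 0 => rw [hβ0, zero_mul, zero_mul]
    | (k+1) =>
      simp only [Nat.add_sub_cancel]
      rw [show X * P (k+1) * P k = X * P k * P (k+1) from by ring, T1 k]
  have M3 : ∀ m, L (X^3 * P (m+1) * P m) = (β (m+2) + β (m+1) + β m) * h (m+1) := by
    intro m
    have hXp : (X * P (m-1)).natDegree < m + 2 := by
      rw [natDegree_mul X_ne_zero (Pne _), natDegree_X, hdeg]; omega
    have e : X^3 * P (m+1) * P m
        = X * P (m+1) * P (m+2) + (C (β m) * ((X * P (m-1)) * P (m+2))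
          + (C (β (m+1)) * (X * P m * P (m+1))
            + C (β (m+1)) * (C (β m) * (X * P m * P (m-1))))) := by
      calc X^3 * P (m+1) * P m = X * ((X * P (m+1)) * (X * P m)) := by ring
      _ = X * ((P (m+2) + C (β (m+1)) * P m) * (P (m+1) + C (β m) * P (m-1))) := by
          rw [Prec m, Precu m]
      _ = _ := by ring
    rw [e, Lad, Lad, Lad, Lsm, Lsm, Lsm, Lsm, T1 (m+1), LZ _ _ hXp, T1 m]
    linear_combination β (m+1) * TX m + H (m+1) - β m * H m
  have Dd : ∀ j : ℕ, ((1 - X^2) * derivative (P (j+1)) + C ((j:ℝ)+1) * P (j+2)).natDegree ≤ j+1 := by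
    intro j
    apply Polynomial.natDegree_le_iff_coeff_eq_zero.mpr
    intro N hN
    obtain ⟨i, rfl⟩ : ∃ i, N = i + 2 := ⟨N - 2, by omega⟩
    rw [coeff_add, coeff_C_mul,
      show ((1:Polynomial ℝ) - X^2) * derivative (P (j+1))
        = derivative (P (j+1)) - X^2 * derivative (P (j+1)) from by ring,
      coeff_sub, coeff_X_pow_mul, coeff_derivative, coeff_derivative]
    have h1 : (P (j+1)).coeff (i+2+1) = 0 := coefP _ _ (by omega)
    rcases eq_or_lt_of_le (show j ≤ i from by omega) with he | hlt
    · subst he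
      rw [h1, coefPs (j+1), coefPs (j+2)]
      push_cast; ring
    · rw [h1, coefP (j+1) (i+1) (by omega), coefP (j+2) (i+2) (by omega)]
      ring
  have Wlem : ∀ j : ℕ, L ((1 - X^2) * derivative (P (j+1)) * P (j+2)) = -((j:ℝ)+1) * h (j+2) := by
    intro j
    have hD := Dd j
    rw [show (1 - X^2) * derivative (P (j+1)) * P (j+2)
        = ((1 - X^2) * derivative (P (j+1)) + C ((j:ℝ)+1) * P (j+2)) * P (j+2)
          - C ((j:ℝ)+1) * (P (j+2) * P (j+2)) from by ring,
      Lsub, Lsm, LZ _ _ (by omega), hhL]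
    ring
  have Ylem : ∀ m : ℕ, L ((1 - X^2) * P (m+1) * derivative (P m)) = -(m:ℝ) * h (m+1) := by
    intro m
    match m with
    | 0 =>
      rw [show (1 - X^2) * P 1 * derivative (P 0) = 0 from by rw [hP0]; simp, Lzero0]
      simp
    | (k+1) =>
      rw [show (1 - X^2) * P (k+2) * derivative (P (k+1))
          = (1 - X^2) * derivative (P (k+1)) * P (k+2) from by ring, Wlem k]
      push_cast; ring
  have IBPL : ∀ Q : Polynomial ℝ, L ((1 - X^2) * derivative Q - C (2*(1+α)) * (X * Q)
      - C (2*t) * (X * ((1 - X^2) * Q))) = 0 := by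
    intro Q
    simp only [hL, hw]
    exact bde_ibp α t hα Q
  have CF : ∀ m : ℕ, L ((1 - X^2) * derivative (P (m+1)) * P m)
      = ((m:ℝ)+2+2*α+2*t-2*t*(β (m+2) + β (m+1) + β m)) * h (m+1) := by
    intro m
    have hibp := IBPL (P (m+1) * P m)
    rw [show (1 - X^2) * derivative (P (m+1) * P m) - C (2*(1+α)) * (X * (P (m+1) * P m))
        - C (2*t) * (X * ((1 - X^2) * (P (m+1) * P m)))
        = (1 - X^2) * derivative (P (m+1)) * P m + (1 - X^2) * P (m+1) * derivative (P m)
          - C (2*(1+α)) * (X * P (m+1) * P m) - C (2*t) * (X * P (m+1) * P m)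
          + C (2*t) * (X^3 * P (m+1) * P m) from by rw [derivative_mul]; ring,
      Lad, Lsub, Lsub, Lad, Lsm, Lsm, Lsm, Ylem m, M3 m,
      show X * P (m+1) * P m = X * P m * P (m+1) from by ring, T1 m] at hibp
    linear_combination hibp
  have DS2 : ∀ m : ℕ,
      1 - (β (m+2) + β (m+1)) - ((m:ℝ)+1) * β (m+2)
        + β (m+1) * ((m:ℝ)+2+2*α+2*t-2*t*(β (m+2) + β (m+1) + β m))
      = β (m+2) * ((m:ℝ)+3+2*α+2*t-2*t*(β (m+3) + β (m+2) + β (m+1))) - (m:ℝ) * β (m+1) := by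
    intro m
    have hd : (1:Polynomial ℝ) * P (m+1) + X * derivative (P (m+1))
        = derivative (P (m+2)) + C (β (m+1)) * derivative (P m) := by
      have hdv := congrArg derivative (Prec m)
      rw [derivative_mul, derivative_X, derivative_add, derivative_C_mul] at hdv
      exact hdv
    have hE := congrArg (fun p : Polynomial ℝ => L ((1 - X^2) * P (m+1) * p)) hd
    -- expand LHS
    have e1 : (1 - X^2) * P (m+1) * ((1:Polynomial ℝ) * P (m+1) + X * derivative (P (m+1)))
        = (P (m+1) * P (m+1) - X^2 * P (m+1) * P (m+1))
          + ((1 - X^2) * derivative (P (m+1)) * P (m+2)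
            + C (β (m+1)) * ((1 - X^2) * derivative (P (m+1)) * P m)) := by
      calc (1 - X^2) * P (m+1) * ((1:Polynomial ℝ) * P (m+1) + X * derivative (P (m+1)))
          = (P (m+1) * P (m+1) - X^2 * P (m+1) * P (m+1))
            + (1 - X^2) * derivative (P (m+1)) * (X * P (m+1)) := by ring
      _ = (P (m+1) * P (m+1) - X^2 * P (m+1) * P (m+1))
            + (1 - X^2) * derivative (P (m+1)) * (P (m+2) + C (β (m+1)) * P m) := by
          rw [Prec m]
      _ = _ := by ring
    have e2 : (1 - X^2) * P (m+1) * (derivative (P (m+2)) + C (β (m+1)) * derivative (P m))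
        = (1 - X^2) * derivative (P (m+2)) * P (m+1)
          + C (β (m+1)) * ((1 - X^2) * P (m+1) * derivative (P m)) := by ring
    rw [e1, e2, Lad, Lsub, Lad, Lsm, Lad, Lsm, hhL, M2b m, Wlem m, CF m, CF (m+1), Ylem m,
      H (m+1)] at hE
    have hcan : (1 - (β (m+2) + β (m+1)) - ((m:ℝ)+1) * β (m+2)
        + β (m+1) * ((m:ℝ)+2+2*α+2*t-2*t*(β (m+2) + β (m+1) + β m))) * h (m+1)
        = (β (m+2) * ((m:ℝ)+3+2*α+2*t-2*t*(β (m+3) + β (m+2) + β (m+1))) - (m:ℝ) * β (m+1))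
          * h (m+1) := by
      push_cast at hE ⊢
      linear_combination hE
    exact mul_right_cancel₀ (hpos (m+1)).ne' hcan
  -- base relation
  have hb' : 1 - β 1 = (2+2*α+2*t-2*t*(β 2 + β 1)) * β 1 := by
    have hX1 : L ((1 - X^2) * derivative (P 1) * P 0) = h 0 - h 1 := by
      rw [show (1 - X^2) * derivative (P 1) * P 0 = P 0 * P 0 - X * P 0 * P 1 from by
        rw [hP0, hP1, derivative_X]; ring, Lsub, hhL, T1 0]
    have hbase := CF 0
    rw [hX1] at hbase
    apply mul_right_cancel₀ (hpos 0).ne'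
    rw [H 0] at hbase
    push_cast at hbase
    linear_combination hbase - 2*t*(β 1 * h 0)*hβ0
  have main : ∀ m : ℕ, ((m:ℝ)+1 - 2*t*β (m+1))^2 + 2*α*((m:ℝ)+1 - 2*t*β (m+1))
      - β (m+1) * (2*((m:ℝ)+1) - 1 + 2*α - 2*t*β m - 2*t*β (m+1))
        * (2*((m:ℝ)+1) + 1 + 2*α - 2*t*β (m+1) - 2*t*β (m+2)) = 0 := by
    intro m
    induction m with
    | zero =>
      simp only [Nat.cast_zero, hβ0]
      linear_combination (1 + 2*α - 2*t*β 1) * hb'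
    | succ k ih =>
      have hs := DS2 k
      push_cast
      push_cast at ih hs
      linear_combination ih + (2*((k:ℝ)+1)+1+2*α-2*t*(β (k+1)+β (k+2))) * hs
  intro n hn
  obtain ⟨m, rfl⟩ : ∃ m, n = m + 1 := ⟨n - 1, by omega⟩
  have hm := main m
  simp only [Nat.add_sub_cancel]
  push_cast
  linear_combination hm
end

section
/- For the weight w(x,t) = (1-x^2)^α e^{-t x^2} on [-1,1], β_1(t) = Φ(3/2, 5/2 + α; -t) / ((3 + 2α) Φ(1/2, 3/2 + α; -t)), where Φ is Kummer's confluent hypergeometric function. -/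
open MeasureTheory Polynomial

noncomputable def kummerPhi (a b z : ℝ) : ℝ :=
  ∑' k : ℕ, ((∏ i ∈ Finset.range k, (a + i)) / (∏ i ∈ Finset.range k, (b + i))) * z ^ k / (Nat.factorial k)

open intervalIntegral Set

lemma aesm_rpow (α : ℝ) : AEStronglyMeasurable (fun x : ℝ => (1 - x ^ 2) ^ α)
    (volume.restrict (Set.uIoc (-1:ℝ) 1)) := by
  rw [Set.uIoc_of_le (by norm_num : (-1:ℝ) ≤ 1),
    ← Measure.restrict_congr_set Ioo_ae_eq_Ioc]
  apply ContinuousOn.aestronglyMeasurable _ measurableSet_Ioo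
  intro x hx
  apply ContinuousAt.continuousWithinAt
  have hsq : (0:ℝ) < 1 - x ^ 2 := by
    simp only [mem_Ioo] at hx; nlinarith [hx.1, hx.2]
  exact ((continuous_const.sub (continuous_pow 2)).continuousAt).rpow_const (Or.inl hsq.ne')

lemma rpowInt {α : ℝ} (hα : α > -1) :
    IntervalIntegrable (fun x : ℝ => (1 - x ^ 2) ^ α) volume (-1) 1 := by
  set C : ℝ := max ((2:ℝ)^α) 1 with hCdef
  have h1 : IntervalIntegrable (fun x : ℝ => C * ((1-x)^α + (1+x)^α)) volume (-1) 1 := by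
    apply IntervalIntegrable.const_mul
    apply IntervalIntegrable.add
    · have := ((intervalIntegral.intervalIntegrable_rpow' (a := 0) (b := 2) hα).comp_sub_left 1).symm
      norm_num at this; exact this
    · have := (intervalIntegral.intervalIntegrable_rpow' (a := 0) (b := 2) hα).comp_add_left 1
      norm_num at this
      simpa [add_comm] using this
  apply h1.mono_fun' (aesm_rpow α)
  have hne : ∀ᵐ x ∂(volume.restrict (Set.uIoc (-1:ℝ) 1)), x ≠ 1 := by
    refine ae_restrict_of_ae ?_
    rw [ae_iff]; simpa using measure_singleton (1:ℝ)
  have hmem : ∀ᵐ x ∂(volume.restrict (Set.uIoc (-1:ℝ) 1)), x ∈ Set.uIoc (-1:ℝ) 1 :=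
    ae_restrict_mem measurableSet_uIoc
  filter_upwards [hne, hmem] with x hx1 hx
  rw [Set.uIoc_of_le (by norm_num)] at hx
  have hx1' : x < 1 := lt_of_le_of_ne hx.2 hx1
  have h1x : 0 < 1 - x := by linarith
  have h1x' : 0 < 1 + x := by linarith [hx.1]
  have hsq : 0 < 1 - x^2 := by nlinarith
  have hfac : (1 - x^2 : ℝ) = (1-x) * (1+x) := by ring
  rw [Real.norm_of_nonneg (Real.rpow_nonneg hsq.le α), hfac,
    Real.mul_rpow h1x.le h1x'.le]
  have hb : ∀ y : ℝ, 1 ≤ y → y ≤ 2 → y ^ α ≤ C := by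
    intro y hy hy2
    rcases le_or_gt 0 α with hα0 | hα0
    · exact le_max_of_le_left (Real.rpow_le_rpow (by linarith) hy2 hα0)
    · exact le_max_of_le_right (Real.rpow_le_one_of_one_le_of_nonpos hy hα0.le)
  have hA : 0 ≤ (1-x)^α := Real.rpow_nonneg h1x.le α
  have hB : 0 ≤ (1+x)^α := Real.rpow_nonneg h1x'.le α
  have hCpos : (0:ℝ) ≤ C := le_max_of_le_right zero_le_one
  rcases le_or_gt 0 x with hx0 | hx0
  · have : (1+x)^α ≤ C := hb _ (by linarith) (by linarith [hx.2])
    nlinarith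
  · have : (1-x)^α ≤ C := hb _ (by linarith) (by linarith [hx.1])
    nlinarith

lemma contInt {α : ℝ} (hα : α > -1) {g : ℝ → ℝ} (hg : Continuous g) :
    IntervalIntegrable (fun x : ℝ => g x * (1 - x ^ 2) ^ α) volume (-1) 1 := by
  obtain ⟨M, hM⟩ := (isCompact_Icc (a := (-1:ℝ)) (b := 1)).exists_bound_of_continuousOn
    hg.continuousOn
  have hM0 : 0 ≤ M := le_trans (norm_nonneg _) (hM 0 (by norm_num))
  apply ((rpowInt hα).const_mul M).mono_fun'
    (hg.aestronglyMeasurable.mul (aesm_rpow α))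
  have hmem : ∀ᵐ x ∂(volume.restrict (Set.uIoc (-1:ℝ) 1)), x ∈ Set.uIoc (-1:ℝ) 1 :=
    ae_restrict_mem measurableSet_uIoc
  filter_upwards [hmem] with x hx
  rw [Set.uIoc_of_le (by norm_num)] at hx
  have hsq : (0:ℝ) ≤ 1 - x ^ 2 := by nlinarith [hx.1, hx.2]
  have hr : (0:ℝ) ≤ (1 - x^2) ^ α := Real.rpow_nonneg hsq α
  simp only [Pi.mul_apply, norm_mul, Real.norm_of_nonneg hr]
  exact mul_le_mul_of_nonneg_right (hM x ⟨hx.1.le, hx.2⟩) hr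

noncomputable def Iint (α : ℝ) (k : ℕ) : ℝ := ∫ x in (-1:ℝ)..1, x ^ (2*k) * (1 - x^2)^α

lemma Iint_step {α : ℝ} (hα : α > -1) (k : ℕ) :
    (2*(k:ℝ)+2*α+3) * Iint α (k+1) = (2*(k:ℝ)+1) * Iint α k := by
  have hα1 : (0:ℝ) < α + 1 := by linarith
  set F : ℝ → ℝ := fun x => x ^ (2*k+1) * (1 - x^2) ^ (α+1) with hF
  set φ : ℝ → ℝ := fun x =>
    (((2*(k:ℝ)+1) * x ^ (2*k) * (1 - x^2)) - 2*(α+1) * x ^ (2*k+2)) * (1 - x^2) ^ α with hφ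
  have hderiv : ∀ x ∈ Ioo (-1:ℝ) 1, HasDerivAt F (φ x) x := by
    intro x hx
    have hsq : (0:ℝ) < 1 - x^2 := by nlinarith [hx.1, hx.2]
    have hu : HasDerivAt (fun x : ℝ => x ^ (2*k+1)) ((2*(k:ℝ)+1) * x ^ (2*k)) x := by
      have := hasDerivAt_pow (2*k+1) x
      simpa [Nat.cast_add, Nat.cast_mul] using this
    have hb : HasDerivAt (fun x : ℝ => 1 - x^2) (-(2*x)) x := by
      simpa using ((hasDerivAt_pow 2 x).const_sub 1)
    have hv : HasDerivAt (fun x : ℝ => (1 - x^2) ^ (α+1))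
        ((α+1) * (1 - x^2) ^ α * (-(2*x))) x := by
      have := hb.rpow_const (p := α+1) (Or.inl hsq.ne')
      convert this using 1
      ring_nf
    have := hu.mul hv
    convert this using 1
    · rfl
    · rfl
    · rfl
    have hsplit : (1 - x^2) ^ (α+1) = (1 - x^2) ^ α * (1 - x^2) :=
      Real.rpow_add_one hsq.ne' α
    rw [hφ]
    simp only [hsplit]
    ring
  have hint : IntervalIntegrable φ volume (-1) 1 := by
    apply contInt hα
    continuity
  have hF1 : Filter.Tendsto F (nhdsWithin 1 (Set.Iio 1)) (nhds 0) := by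
    have hc : ContinuousAt F 1 := by
      apply ContinuousAt.mul (continuousAt_pow _ _)
      exact ((continuous_const.sub (continuous_pow 2)).continuousAt).rpow_const (Or.inr hα1.le)
    have : F 1 = 0 := by
      simp [hF, Real.zero_rpow hα1.ne']
    rw [← this]
    exact hc.continuousWithinAt.tendsto
  have hFm1 : Filter.Tendsto F (nhdsWithin (-1) (Set.Ioi (-1:ℝ))) (nhds 0) := by
    have hc : ContinuousAt F (-1) := by
      apply ContinuousAt.mul (continuousAt_pow _ _)
      exact ((continuous_const.sub (continuous_pow 2)).continuousAt).rpow_const (Or.inr hα1.le)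
    have : F (-1) = 0 := by
      simp [hF, Real.zero_rpow hα1.ne']
    rw [← this]
    exact hc.continuousWithinAt.tendsto
  have hFTC : (∫ x in (-1:ℝ)..1, φ x) = 0 - 0 :=
    intervalIntegral.integral_eq_sub_of_hasDerivAt_of_tendsto (by norm_num) hderiv hint hFm1 hF1
  have hsplit : (∫ x in (-1:ℝ)..1, φ x)
      = (2*(k:ℝ)+1) * Iint α k - (2*(k:ℝ)+2*α+3) * Iint α (k+1) := by
    have h1 : IntervalIntegrable (fun x : ℝ => x ^ (2*k) * (1 - x^2)^α) volume (-1) 1 :=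
      contInt hα (by continuity)
    have h2 : IntervalIntegrable (fun x : ℝ => x ^ (2*(k+1)) * (1 - x^2)^α) volume (-1) 1 :=
      contInt hα (by continuity)
    have hcongr : (∫ x in (-1:ℝ)..1, φ x) = ∫ x in (-1:ℝ)..1,
        ((2*(k:ℝ)+1) * (x ^ (2*k) * (1 - x^2)^α)
          - (2*(k:ℝ)+2*α+3) * (x ^ (2*(k+1)) * (1 - x^2)^α)) := by
      apply intervalIntegral.integral_congr
      intro x _
      simp only [hφ]
      have : x ^ (2*(k+1)) = x ^ (2*k+2) := by ring
      rw [this]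
      ring
    rw [hcongr, intervalIntegral.integral_sub (h1.const_mul _) (h2.const_mul _),
      intervalIntegral.integral_const_mul, intervalIntegral.integral_const_mul]
    rfl
  rw [hFTC] at hsplit
  linarith

lemma Iint_nonneg {α : ℝ} (k : ℕ) : 0 ≤ Iint α k := by
  apply intervalIntegral.integral_nonneg (by norm_num)
  intro x hx
  have hsq : (0:ℝ) ≤ 1 - x ^ 2 := by nlinarith [hx.1, hx.2]
  have : (0:ℝ) ≤ x ^ (2*k) := by
    rw [pow_mul]; positivity
  exact mul_nonneg this (Real.rpow_nonneg hsq α)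

lemma Iint_le {α : ℝ} (hα : α > -1) (k : ℕ) : Iint α k ≤ Iint α 0 := by
  apply intervalIntegral.integral_mono_on (by norm_num)
    (contInt hα (by continuity)) (contInt hα (by continuity))
  intro x hx
  have hsq : (0:ℝ) ≤ 1 - x ^ 2 := by nlinarith [hx.1, hx.2]
  have h1 : x ^ (2*k) ≤ x ^ (2*0) := by
    rw [pow_mul, pow_mul, pow_zero]
    exact pow_le_one₀ (by positivity) (by nlinarith [hx.1, hx.2])
  exact mul_le_mul_of_nonneg_right h1 (Real.rpow_nonneg hsq α)

lemma prod_pos {α : ℝ} (hα : α > -1) (k : ℕ) :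
    0 < ∏ i ∈ Finset.range k, (3/2 + α + (i:ℝ)) := by
  apply Finset.prod_pos
  intro i _
  have : (0:ℝ) ≤ i := Nat.cast_nonneg i
  linarith

lemma Iint_closed {α : ℝ} (hα : α > -1) (k : ℕ) :
    Iint α k = Iint α 0 * (∏ i ∈ Finset.range k, ((1:ℝ)/2 + i))
      / (∏ i ∈ Finset.range k, (3/2 + α + (i:ℝ))) := by
  induction k with
  | zero => simp
  | succ k ih =>
    have hstep := Iint_step hα k
    have hd : (0:ℝ) < 2*(k:ℝ)+2*α+3 := by
      have : (0:ℝ) ≤ k := Nat.cast_nonneg k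
      linarith
    have hP := prod_pos hα k
    rw [Finset.prod_range_succ, Finset.prod_range_succ]
    have : Iint α (k+1) = (2*(k:ℝ)+1) * Iint α k / (2*(k:ℝ)+2*α+3) := by
      rw [eq_div_iff hd.ne']
      linear_combination hstep
    rw [this, ih]
    field_simp
    ring

lemma exp_series (y : ℝ) : Real.exp y = ∑' n : ℕ, y ^ n / n.factorial := by
  rw [Real.exp_eq_exp_ℝ, NormedSpace.exp_eq_tsum_div]

lemma expand {α : ℝ} (hα : α > -1) (t : ℝ) (m : ℕ) :
    (∫ x in (-1:ℝ)..1, x ^ (2*m) * ((1 - x^2) ^ α * Real.exp (-t * x^2)))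
      = ∑' k : ℕ, ((-t) ^ k / k.factorial) * Iint α (k+m) := by
  set F : ℕ → ℝ → ℝ := fun k x => ((-t) ^ k / k.factorial) * (x ^ (2*(k+m)) * (1 - x^2) ^ α)
    with hFdef
  have hFint : ∀ k, IntegrableOn (F k) (Set.Ioc (-1:ℝ) 1) volume := by
    intro k
    rw [← intervalIntegrable_iff_integrableOn_Ioc_of_le (by norm_num : (-1:ℝ) ≤ 1)]
    exact (contInt hα (by continuity)).const_mul _
  have hnorm : ∀ k, (∫ x in Set.Ioc (-1:ℝ) 1, ‖F k x‖)
      = |(-t) ^ k / k.factorial| * Iint α (k+m) := by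
    intro k
    have hcong : ∀ x ∈ Set.Ioc (-1:ℝ) 1, ‖F k x‖
        = |(-t) ^ k / k.factorial| * (x ^ (2*(k+m)) * (1 - x^2) ^ α) := by
      intro x hx
      have hsq : (0:ℝ) ≤ 1 - x ^ 2 := by nlinarith [hx.1, hx.2]
      have h1 : (0:ℝ) ≤ x ^ (2*(k+m)) := by rw [pow_mul]; positivity
      rw [hFdef]
      simp only [norm_mul, Real.norm_eq_abs, abs_div]
      rw [abs_of_nonneg h1, abs_of_nonneg (Real.rpow_nonneg hsq α)]
    rw [setIntegral_congr_fun measurableSet_Ioc hcong, MeasureTheory.integral_const_mul,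
      ← intervalIntegral.integral_of_le (by norm_num : (-1:ℝ) ≤ 1)]
    rfl
  have hsum : Summable fun k : ℕ => ∫ x in Set.Ioc (-1:ℝ) 1, ‖F k x‖ := by
    apply Summable.of_nonneg_of_le
      (fun k => integral_nonneg fun x => norm_nonneg _)
      (fun k => ?_) ((Real.summable_pow_div_factorial |t|).mul_right (Iint α 0))
    rw [hnorm k]
    have h1 : |(-t) ^ k / (k.factorial:ℝ)| = |t| ^ k / k.factorial := by
      rw [abs_div, abs_pow, abs_neg, Nat.abs_cast]
    rw [h1]
    exact mul_le_mul_of_nonneg_left (Iint_le hα (k+m))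
      (by positivity)
  have hkey := MeasureTheory.integral_tsum_of_summable_integral_norm hFint hsum
  have htsum : ∀ x ∈ Set.Ioc (-1:ℝ) 1,
      (∑' k : ℕ, F k x) = x ^ (2*m) * ((1 - x^2) ^ α * Real.exp (-t * x^2)) := by
    intro x hx
    have : ∀ k : ℕ, F k x = ((-t * x^2) ^ k / k.factorial) * (x ^ (2*m) * (1 - x^2) ^ α) := by
      intro k
      simp only [hFdef]
      have h2 : x ^ (2*(k+m)) = (x^2) ^ k * x ^ (2*m) := by
        rw [← pow_mul, ← pow_add]; ring_nf
      have h3 : (-(t * x^2):ℝ)^k = (-t)^k * (x^2)^k := by rw [← mul_pow, neg_mul]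
      rw [h2, neg_mul, h3]
      ring
    rw [tsum_congr this, tsum_mul_right, ← exp_series]
    ring
  calc (∫ x in (-1:ℝ)..1, x ^ (2*m) * ((1 - x^2) ^ α * Real.exp (-t * x^2)))
      = ∫ x in Set.Ioc (-1:ℝ) 1, x ^ (2*m) * ((1 - x^2) ^ α * Real.exp (-t * x^2)) :=
        intervalIntegral.integral_of_le (by norm_num)
    _ = ∫ x in Set.Ioc (-1:ℝ) 1, (∑' k : ℕ, F k x) :=
        (setIntegral_congr_fun measurableSet_Ioc htsum).symm
    _ = ∑' k : ℕ, ∫ x in Set.Ioc (-1:ℝ) 1, F k x := hkey.symm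
    _ = ∑' k : ℕ, ((-t) ^ k / k.factorial) * Iint α (k+m) := by
        apply tsum_congr
        intro k
        rw [MeasureTheory.integral_const_mul, ← intervalIntegral.integral_of_le (by norm_num : (-1:ℝ) ≤ 1)]
        rfl

lemma seriesA {α : ℝ} (hα : α > -1) (t : ℝ) :
    ∑' k : ℕ, ((-t) ^ k / k.factorial) * Iint α (k+0)
      = Iint α 0 * kummerPhi (1/2) (3/2 + α) (-t) := by
  rw [kummerPhi, ← tsum_mul_left]
  apply tsum_congr
  intro k
  rw [Iint_closed hα (k+0)]
  have hP := (prod_pos hα (k+0)).ne'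
  have h1 : ∀ i ∈ Finset.range (k+0), (3/2 + α + (i:ℝ)) = (3/2 + α + (i:ℝ)) := fun _ _ => rfl
  have : (∏ i ∈ Finset.range k, (3/2 + α + (i:ℝ))) ≠ 0 := (prod_pos hα k).ne'
  field_simp
  ring

lemma seriesB {α : ℝ} (hα : α > -1) (t : ℝ) :
    ∑' k : ℕ, ((-t) ^ k / k.factorial) * Iint α (k+1)
      = Iint α 0 * kummerPhi (3/2) (5/2 + α) (-t) / (3 + 2*α) := by
  rw [kummerPhi, ← tsum_mul_left, ← tsum_div_const]
  apply tsum_congr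
  intro k
  rw [Iint_closed hα (k+1)]
  have hnum : (∏ i ∈ Finset.range (k+1), ((1:ℝ)/2 + i))
      = (∏ i ∈ Finset.range k, ((3:ℝ)/2 + i)) * (1/2) := by
    rw [Finset.prod_range_succ']
    congr 1
    · apply Finset.prod_congr rfl
      intro i _
      push_cast
      ring
    · norm_num
  have hden : (∏ i ∈ Finset.range (k+1), (3/2 + α + (i:ℝ)))
      = (∏ i ∈ Finset.range k, (5/2 + α + (i:ℝ))) * (3/2 + α) := by
    rw [Finset.prod_range_succ']
    congr 1
    · apply Finset.prod_congr rfl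
      intro i _
      push_cast
      ring
    · norm_num
  rw [hnum, hden]
  have h1 : (∏ i ∈ Finset.range k, (5/2 + α + (i:ℝ))) ≠ 0 := by
    apply ne_of_gt
    apply Finset.prod_pos
    intro i _
    have : (0:ℝ) ≤ i := Nat.cast_nonneg i
    linarith
  have h2 : (3/2 + α : ℝ) ≠ 0 := by linarith
  have h3 : (3 + 2*α : ℝ) ≠ 0 := by linarith
  field_simp

theorem beta_one_formula (α t : ℝ) (hα : α > -1)
    (w : ℝ → ℝ) (hw : ∀ x, w x = (1 - x ^ 2) ^ α * Real.exp (-t * x ^ 2))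
    (P : ℕ → Polynomial ℝ)
    (hmonic : ∀ n, (P n).Monic)
    (hdeg : ∀ n, (P n).natDegree = n)
    (horth : ∀ m n, m ≠ n → (∫ x in (-1:ℝ)..1, (P m).eval x * (P n).eval x * w x) = 0)
    (h : ℕ → ℝ)
    (hh : ∀ n, h n = ∫ x in (-1:ℝ)..1, ((P n).eval x) ^ 2 * w x)
    (hpos : ∀ n, 0 < h n)
    (β : ℕ → ℝ) (hβ0 : β 0 = 0)
    (hrec : ∀ n, 1 ≤ n → ∀ x : ℝ, x * (P n).eval x = (P (n+1)).eval x + β n * (P (n-1)).eval x)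
    :
    β 1 = kummerPhi (3/2) (5/2 + α) (-t) / ((3 + 2 * α) * kummerPhi (1/2) (3/2 + α) (-t)) := by
  set Φ₁ := kummerPhi (1/2) (3/2 + α) (-t) with hΦ₁
  set Φ₂ := kummerPhi (3/2) (5/2 + α) (-t) with hΦ₂
  set μ0 := ∫ x in (-1:ℝ)..1, w x with hμ0def
  set μ2 := ∫ x in (-1:ℝ)..1, x^2 * w x with hμ2def
  -- integrability of g * w for continuous g
  have Hgw : ∀ g : ℝ → ℝ, Continuous g →
      IntervalIntegrable (fun x => g x * w x) volume (-1) 1 := by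
    intro g hg
    have h1 : IntervalIntegrable (fun x : ℝ => (g x * Real.exp (-t * x^2)) * (1 - x^2) ^ α)
        volume (-1) 1 := contInt hα (by continuity)
    have : (fun x : ℝ => (g x * Real.exp (-t * x^2)) * (1 - x^2) ^ α)
        = fun x => g x * w x := by
      funext x
      rw [hw]
      ring
    rwa [this] at h1
  have hwInt : IntervalIntegrable w volume (-1) 1 := by
    have := Hgw (fun _ => 1) continuous_const
    simpa using this
  -- series identities
  have hμ0 : μ0 = Iint α 0 * Φ₁ := by
    rw [hμ0def, hΦ₁, ← seriesA hα t, ← expand hα t 0]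
    apply intervalIntegral.integral_congr
    intro x _
    rw [hw]
    norm_num
  have hμ2 : μ2 = Iint α 0 * Φ₂ / (3 + 2*α) := by
    rw [hμ2def, hΦ₂, ← seriesB hα t, ← expand hα t 1]
    apply intervalIntegral.integral_congr
    intro x _
    simp only [hw]
  -- positivity of μ0
  have hP0 : P 0 = 1 := (hmonic 0).natDegree_eq_zero.mp (hdeg 0)
  have hμ0pos : 0 < μ0 := by
    have := hpos 0
    rw [hh 0] at this
    have he : (∫ x in (-1:ℝ)..1, ((P 0).eval x) ^ 2 * w x) = μ0 := by
      rw [hμ0def]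
      apply intervalIntegral.integral_congr
      intro x _
      rw [hP0]
      simp
    rwa [he] at this
  -- odd integral vanishes
  have hweven : ∀ x : ℝ, w (-x) = w x := by
    intro x
    simp [hw, neg_sq]
  have hoddInt : (∫ x in (-1:ℝ)..1, x * w x) = 0 := by
    have hI : IntervalIntegrable (fun x => x * w x) volume (-1) 1 := Hgw _ continuous_id
    have hI1 : IntervalIntegrable (fun x => x * w x) volume (-1) 0 := by
      apply hI.mono_set'
      rw [Set.uIoc_of_le (by norm_num : (-1:ℝ) ≤ 0), Set.uIoc_of_le (by norm_num : (-1:ℝ) ≤ 1)]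
      exact Set.Ioc_subset_Ioc_right (by norm_num)
    have hI2 : IntervalIntegrable (fun x => x * w x) volume 0 1 := by
      apply hI.mono_set'
      rw [Set.uIoc_of_le (by norm_num : (0:ℝ) ≤ 1), Set.uIoc_of_le (by norm_num : (-1:ℝ) ≤ 1)]
      exact Set.Ioc_subset_Ioc_left (by norm_num)
    have hadd := intervalIntegral.integral_add_adjacent_intervals hI1 hI2
    have hneg : (∫ x in (-1:ℝ)..0, x * w x) = - ∫ x in (0:ℝ)..1, x * w x := by
      have hc := intervalIntegral.integral_comp_neg (a := (0:ℝ)) (b := 1)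
        (fun x => x * w x)
      have hc2 : (∫ x in (0:ℝ)..1, (-x) * w (-x)) = ∫ x in (0:ℝ)..1, -(x * w x) := by
        apply intervalIntegral.integral_congr
        intro x _
        simp [hweven x]
      rw [hc2, intervalIntegral.integral_neg] at hc
      simp only [neg_zero] at hc
      exact hc.symm
    rw [← hadd, hneg]
    ring
  -- the recurrence applied
  set c := (P 1).coeff 0 with hcdef
  have hP1 : P 1 = Polynomial.X + Polynomial.C c := (hmonic 1).eq_X_add_C (hdeg 1)
  have hP2eval : ∀ x : ℝ, (P 2).eval x = x^2 + c*x - β 1 := by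
    intro x
    have hr := hrec 1 le_rfl x
    rw [hP1, hP0] at hr
    simp only [Polynomial.eval_add, Polynomial.eval_X, Polynomial.eval_C,
      Polynomial.eval_one, mul_one] at hr
    linear_combination -hr
  have h20 : (∫ x in (-1:ℝ)..1, (P 2).eval x * w x) = 0 := by
    have := horth 2 0 (by norm_num)
    rw [hP0] at this
    simpa using this
  have hA : IntervalIntegrable (fun x : ℝ => x^2 * w x) volume (-1) 1 :=
    Hgw _ (continuous_pow 2)
  have hB : IntervalIntegrable (fun x : ℝ => c * (x * w x)) volume (-1) 1 :=
    (Hgw _ continuous_id).const_mul c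
  have hC : IntervalIntegrable (fun x : ℝ => β 1 * w x) volume (-1) 1 :=
    hwInt.const_mul (β 1)
  have hkey : μ2 - β 1 * μ0 = 0 := by
    have e1 : (∫ x in (-1:ℝ)..1, (P 2).eval x * w x)
        = ∫ x in (-1:ℝ)..1, (x^2 * w x + c * (x * w x) - β 1 * w x) := by
      apply intervalIntegral.integral_congr
      intro x _
      simp only [hP2eval x]
      ring
    rw [e1, intervalIntegral.integral_sub (hA.add hB) hC,
      intervalIntegral.integral_add hA hB,
      intervalIntegral.integral_const_mul, intervalIntegral.integral_const_mul,
      hoddInt] at h20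
    rw [hμ2def, hμ0def]
    linarith [h20]
  -- final algebra
  have hI0nonneg : 0 ≤ Iint α 0 := Iint_nonneg 0
  have hI0ne : Iint α 0 ≠ 0 := by
    intro h0
    rw [hμ0, h0] at hμ0pos
    simp at hμ0pos
  have hΦ₁ne : Φ₁ ≠ 0 := by
    intro h0
    rw [hμ0, h0] at hμ0pos
    simp at hμ0pos
  have h3α : (3 + 2*α : ℝ) ≠ 0 := by linarith
  have heq : β 1 * (Iint α 0 * Φ₁) = Iint α 0 * Φ₂ / (3 + 2*α) := by
    rw [← hμ0, ← hμ2]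
    linarith [hkey]
  have h2' : β 1 * (Iint α 0 * Φ₁) * (3+2*α) = Iint α 0 * Φ₂ := by
    rw [heq]; field_simp
  rw [eq_div_iff (mul_ne_zero h3α hΦ₁ne)]
  apply mul_left_cancel₀ hI0ne
  linear_combination h2'
end
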